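/- Fix an even context length L and set h = L/2. In the ISWI schedule, at any prediction step T ≥ h (i.e., any step in stage i = ⌊T/h⌋ ≥ 1), the active inference instance has accumulated context covering at least the last h events; equivalently, the number of events held in the active instance's cache at step T is at least h and at most L. -/
import Mathlib


/-- Number of events held by the active ISWI instance at step `T` (stage
`i = ⌊T/h⌋ ≥ 1`): the active instance last cleared its cache at the end of
stage `i - 2`, so it has accumulated all events from the start of stage
`i - 1` (step `(i-1)·h`) through step `T`. -/
def iswiActiveCache (h T : ℕ) : ℕ := T - (T / h - 1) * h + 1

/-- ISWI context guarantee: for an even context length `L` with `h = L/2`, at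
any prediction step `T ≥ h` the active instance's cache holds at least `h` and
at most `L` events. -/
theorem iswi_active_cache_bounds
    (L T : ℕ) (hEven : L % 2 = 0) (hL : 0 < L)
    (hT : L / 2 ≤ T) :
    L / 2 ≤ iswiActiveCache (L / 2) T ∧ iswiActiveCache (L / 2) T ≤ L := by
  have hhpos : 0 < L / 2 := Nat.div_pos (by omega) (by norm_num)
  have hq : 1 ≤ T / (L / 2) := (Nat.one_le_div_iff hhpos).mpr hT
  have hdm := Nat.div_add_mod T (L / 2)
  have hr : T % (L / 2) < L / 2 := Nat.mod_lt _ hhpos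
  have hL2 : 2 * (L / 2) = L := by omega
  obtain ⟨k, hk⟩ := Nat.exists_eq_add_of_le hq
  have key : iswiActiveCache (L / 2) T = L / 2 + T % (L / 2) + 1 := by
    unfold iswiActiveCache
    rw [hk] at hdm ⊢
    have h1 : 1 + k - 1 = k := by omega
    have h2 : (L / 2) * (1 + k) = (L / 2) + k * (L / 2) := by ring
    rw [h1]
    omega
  omega
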